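/- In every 2×2 subsquare (α β / γ δ) of a K-theory growth diagram (so γ ⊆ α ⊆ β and γ ⊆ δ ⊆ β), each of the skew shapes α/γ, β/α, β/δ, δ/γ is a collection of boxes with no two in the same row or column, and δ equals the shape obtained by applying the K-jdt slide K-jdt_{α/γ} to the filling of β/α by all 1's; in particular δ is uniquely determined by γ, α, β, and symmetrically α is uniquely determined by γ, δ, β. -/
import Mathlib


open Finset
open scoped Classical

/-- A box of a Young diagram: (row, column), rows increasing downward. -/
abbrev Box : Type := ℕ × ℕ

/-- A Young diagram: a finite lower set in both coordinates. -/
def IsYoung (μ : Finset Box) : Prop :=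
  (∀ r c : ℕ, (r + 1, c) ∈ μ → (r, c) ∈ μ) ∧
  (∀ r c : ℕ, (r, c + 1) ∈ μ → (r, c) ∈ μ)

/-- Two boxes are adjacent (share an edge). -/
def adjB (a b : Box) : Prop :=
  (a.1 = b.1 ∧ (a.2 + 1 = b.2 ∨ b.2 + 1 = a.2)) ∨
  (a.2 = b.2 ∧ (a.1 + 1 = b.1 ∨ b.1 + 1 = a.1))

/-- Connectivity within a finite set of boxes. -/
def conn (S : Finset Box) (a b : Box) : Prop :=
  Relation.ReflTransGen (fun x y => x ∈ S ∧ y ∈ S ∧ adjB x y) a b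

/-- Entries strictly increase along rows and columns. -/
def IncreasingOn (dom : Finset Box) (f : Box → ℕ) : Prop :=
  (∀ r c : ℕ, (r, c) ∈ dom → (r, c + 1) ∈ dom → f (r, c) < f (r, c + 1)) ∧
  (∀ r c : ℕ, (r, c) ∈ dom → (r + 1, c) ∈ dom → f (r, c) < f (r + 1, c))

def maxEntry (dom : Finset Box) (f : Box → ℕ) : ℕ := dom.sup f

/-- An increasing tableau: positive entries, strictly increasing along rows and
columns, and every value `1,…,max` appears at least once. -/
def IsIncTab (dom : Finset Box) (f : Box → ℕ) : Prop :=
  IncreasingOn dom f ∧ (∀ b ∈ dom, 1 ≤ f b) ∧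
  (∀ v : ℕ, 1 ≤ v → v ≤ maxEntry dom f → ∃ b ∈ dom, f b = v)

/-- A standard Young tableau: an increasing tableau with distinct entries. -/
def IsSYT (dom : Finset Box) (f : Box → ℕ) : Prop :=
  IsIncTab dom f ∧ ∀ a ∈ dom, ∀ b ∈ dom, f a = f b → a = b

/-- An inner corner of `λ`: a maximally southeast box of `λ`. -/
def InnerCorner (lam : Finset Box) (x : Box) : Prop :=
  x ∈ lam ∧ (x.1 + 1, x.2) ∉ lam ∧ (x.1, x.2 + 1) ∉ lam

/-- An outer corner of `ν`: a maximally northwest box outside `ν`. -/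
def OuterCorner (nu : Finset Box) (x : Box) : Prop :=
  x ∉ nu ∧ (x.1 = 0 ∨ (x.1 - 1, x.2) ∈ nu) ∧ (x.2 = 0 ∨ (x.1, x.2 - 1) ∈ nu)

/-- No two boxes of `A` share a row or a column. -/
def NoTwoSameRowCol (A : Finset Box) : Prop :=
  ∀ a ∈ A, ∀ b ∈ A, a ≠ b → a.1 ≠ b.1 ∧ a.2 ≠ b.2

/-- One `switch` stage of a K-jdt slide: in the union of ribbons formed by the
•-boxes (`st.1`) and the boxes of the numerical region `st.2.1` with entry `i`,
swap the two symbols on every connected component with at least two boxes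
(single-box components are unchanged).  The state is (dots, numerical domain,
numerical entries). -/
noncomputable def switchStep (st : Finset Box × Finset Box × (Box → ℕ)) (i : ℕ) :
    Finset Box × Finset Box × (Box → ℕ) :=
  let dots := st.1
  let dom := st.2.1
  let f := st.2.2
  let S : Finset Box := dots ∪ dom.filter (fun b => f b = i)
  let sw : Box → Prop := fun b => ∃ b' ∈ S, b' ≠ b ∧ conn S b b'
  ( dom.filter (fun b => f b = i ∧ sw b) ∪ dots.filter (fun b => ¬ sw b),
    dom.filter (fun b => ¬ (f b = i ∧ sw b)) ∪ dots.filter sw,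
    fun b => if b ∈ dots ∧ sw b then i else f b )

/-- The state of a K-jdt slide started with •'s at `xs`, after processing the
values `1, 2, …, m`. -/
noncomputable def KState (xs dom : Finset Box) (f : Box → ℕ) (m : ℕ) :
    Finset Box × Finset Box × (Box → ℕ) :=
  (List.range m).foldl (fun st i => switchStep st (i + 1)) (xs, dom, f)

/-- The K-theoretic jeu de taquin slide of the tableau `(dom, f)` into the set
`xs` of inner corners: process the values `1,…,max` and discard the final •'s. -/
noncomputable def KJdt (xs dom : Finset Box) (f : Box → ℕ) : Finset Box × (Box → ℕ) :=
  ((KState xs dom f (maxEntry dom f)).2.1, (KState xs dom f (maxEntry dom f)).2.2)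

/-- The state of a reverse K-jdt slide: •'s start at `xs` (outer corners) and the
values `m, m-1, …, 1` are processed in decreasing order. -/
noncomputable def KRevState (xs dom : Finset Box) (f : Box → ℕ) (m : ℕ) :
    Finset Box × Finset Box × (Box → ℕ) :=
  (List.range m).foldr (fun i st => switchStep st (i + 1)) (xs, dom, f)

/-- A slide applied to the state (inner shape `λ`, tableau domain, entries). -/
noncomputable def doSlide (st : Finset Box × Finset Box × (Box → ℕ)) (xs : Finset Box) :
    Finset Box × Finset Box × (Box → ℕ) :=
  (st.1 \ xs, (KJdt xs st.2.1 st.2.2).1, (KJdt xs st.2.1 st.2.2).2)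

/-- A reverse slide applied to the state (inner shape `λ`, tableau domain, entries). -/
noncomputable def doRevSlide (st : Finset Box × Finset Box × (Box → ℕ)) (xs : Finset Box) :
    Finset Box × Finset Box × (Box → ℕ) :=
  (st.1 \ (KRevState xs st.2.1 st.2.2 (maxEntry st.2.1 st.2.2)).1,
   (KRevState xs st.2.1 st.2.2 (maxEntry st.2.1 st.2.2)).2.1,
   (KRevState xs st.2.1 st.2.2 (maxEntry st.2.1 st.2.2)).2.2)

/-- One step of a rectification: a K-jdt slide into a nonempty set of inner corners. -/
def RectStep (p q : Finset Box × Finset Box × (Box → ℕ)) : Prop :=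
  ∃ xs : Finset Box, xs.Nonempty ∧ (∀ x ∈ xs, InnerCorner p.1 x) ∧ q = doSlide p xs

/-- The tableau `(dom, f)` of shape `ν/λ` admits a rectification order ending at
the straight-shape tableau `(dom', f')`. -/
def RectTo (lam dom : Finset Box) (f : Box → ℕ) (dom' : Finset Box) (f' : Box → ℕ) : Prop :=
  ∃ g : Box → ℕ, Relation.ReflTransGen RectStep (lam, dom, f) (∅, dom', g) ∧
    ∀ b ∈ dom', g b = f' b

def rowLen (μ : Finset Box) (r : ℕ) : ℕ := (μ.filter (fun b => b.1 = r)).card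

/-- The superstandard tableau of straight shape `μ`: rows filled consecutively. -/
def sstd (μ : Finset Box) : Box → ℕ :=
  fun b => (∑ i ∈ Finset.range b.1, rowLen μ i) + b.2 + 1

/-- `a` occurs before `b` in the reading word (rows left to right, bottom to top). -/
def ReadBefore (a b : Box) : Prop := b.1 < a.1 ∨ (a.1 = b.1 ∧ a.2 < b.2)

/-- Length of the longest strictly increasing subsequence of the reading word. -/
noncomputable def LIS (dom : Finset Box) (f : Box → ℕ) : ℕ :=
  (dom.powerset.filter
    (fun I => ∀ a ∈ I, ∀ b ∈ I, ReadBefore a b → f a < f b)).sup Finset.card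

/-- One step of K-infusion: slide the boxes carrying the largest label `m` of the
inner tableau through the outer tableau, recording `m` at the vacated holes. -/
noncomputable def infusionStep
    (st : (Finset Box × (Box → ℕ)) × (Finset Box × (Box → ℕ)) × (Finset Box × (Box → ℕ))) :
    (Finset Box × (Box → ℕ)) × (Finset Box × (Box → ℕ)) × (Finset Box × (Box → ℕ)) :=
  let m := maxEntry st.1.1 st.1.2
  let xs := st.1.1.filter (fun b => st.1.2 b = m)
  let ks := KState xs st.2.1.1 st.2.1.2 (maxEntry st.2.1.1 st.2.1.2)
  ( (st.1.1 \ xs, st.1.2),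
    (ks.2.1, ks.2.2),
    (st.2.2.1 ∪ ks.1, fun b => if b ∈ ks.1 then m else st.2.2.2 b) )

/-- K-infusion of the pair `(T, U)`, where `U`'s shape extends `T`'s shape:
returns `(K-infusion₁(T,U), K-infusion₂(T,U))`. -/
noncomputable def KInfusion (Tdom : Finset Box) (Tf : Box → ℕ)
    (Udom : Finset Box) (Uf : Box → ℕ) :
    (Finset Box × (Box → ℕ)) × (Finset Box × (Box → ℕ)) :=
  ((infusionStep^[maxEntry Tdom Tf] ((Tdom, Tf), (Udom, Uf), (∅, fun _ => 0))).2.1,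
   (infusionStep^[maxEntry Tdom Tf] ((Tdom, Tf), (Udom, Uf), (∅, fun _ => 0))).2.2)

/-- `Δ(T)`: erase the entry `1` at the northwest corner, subtract one from the
remaining entries, and slide into the vacated corner. -/
noncomputable def Delta (p : Finset Box × (Box → ℕ)) : Finset Box × (Box → ℕ) :=
  KJdt {((0 : ℕ), (0 : ℕ))} (p.1.erase (0, 0)) (fun b => p.2 b - 1)

/-- K-evacuation: box `b` receives label `i` when `b` belongs to the shape of
`Δ^{i-1}(T)` but not to the shape of `Δ^{i}(T)`. -/
noncomputable def Kevac (p : Finset Box × (Box → ℕ)) : Box → ℕ :=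
  fun b => sInf {i : ℕ | b ∉ (Delta^[i] p).1}

/-- A horizontal strip: no two boxes in the same column. -/
def HorizontalStrip (dom : Finset Box) : Prop :=
  ∀ a ∈ dom, ∀ b ∈ dom, a ≠ b → a.2 ≠ b.2

def LeftmostIn (dom : Finset Box) (r c : ℕ) : Prop :=
  (r, c) ∈ dom ∧ ∀ c' < c, (r, c') ∉ dom

def RightmostIn (dom : Finset Box) (r c : ℕ) : Prop :=
  (r, c) ∈ dom ∧ ∀ c' > c, (r, c') ∉ dom

/-- A `t`-Pieri filling of a horizontal strip: entries of each row consecutive,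
the bottom row starts with `1`, each other row starts with the last entry of the
next nonempty row below it, or with that entry plus one; entries are `1,…,t`. -/
def IsPieri (dom : Finset Box) (f : Box → ℕ) (t : ℕ) : Prop :=
  HorizontalStrip dom ∧
  (∀ r c : ℕ, (r, c) ∈ dom → (r, c + 1) ∈ dom → f (r, c + 1) = f (r, c) + 1) ∧
  (∀ r c : ℕ, LeftmostIn dom r c → (∀ b ∈ dom, b.1 ≤ r) → f (r, c) = 1) ∧
  (∀ r c r' c' : ℕ, LeftmostIn dom r c → RightmostIn dom r' c' → r < r' →
    (∀ b ∈ dom, ¬ (r < b.1 ∧ b.1 < r')) →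
    (f (r, c) = f (r', c') ∨ f (r, c) = f (r', c') + 1)) ∧
  (∀ b ∈ dom, 1 ≤ f b ∧ f b ≤ t) ∧ (dom.Nonempty → ∃ b ∈ dom, f b = t)

/-- The domain of the one-row shape `(t)`. -/
def rowDom (t : ℕ) : Finset Box := (Finset.range t).image (fun c => ((0 : ℕ), c))

/-- The entries of the superstandard one-row tableau `S_(t)`. -/
def rowEnt : Box → ℕ := fun b => b.2 + 1

def numRows (dom : Finset Box) : ℕ := (dom.image Prod.fst).card

/-- The number of increasing tableaux of shape `ν/λ` whose K-rectification (for
some, equivalently by Theorem 1 any, rectification order) is the superstandard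
tableau `S_μ`.  Tableaux are normalized to vanish off their domain. -/
noncomputable def KrectCount (lam nu mu : Finset Box) : ℕ :=
  Set.ncard {f : Box → ℕ | (∀ b, b ∉ nu \ lam → f b = 0) ∧ IsIncTab (nu \ lam) f ∧
    ∃ g, Relation.ReflTransGen RectStep (lam, nu \ lam, f) (∅, mu, g) ∧
      ∀ b ∈ mu, g b = sstd mu b}

/-- Apply a (forward or reverse) K-jdt slide, as specified by `mv`. -/
noncomputable def applyMove (st : Finset Box × Finset Box × (Box → ℕ))
    (mv : Bool × Finset Box) : Finset Box × Finset Box × (Box → ℕ) :=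
  if mv.1 then doSlide st mv.2 else doRevSlide st mv.2

def ValidMove (st : Finset Box × Finset Box × (Box → ℕ)) (mv : Bool × Finset Box) : Prop :=
  mv.2.Nonempty ∧ (mv.1 = true → ∀ x ∈ mv.2, InnerCorner st.1 x) ∧
    (mv.1 = false → ∀ x ∈ mv.2, OuterCorner (st.1 ∪ st.2.1) x)

noncomputable def applySeq (L : List (Bool × Finset Box))
    (st : Finset Box × Finset Box × (Box → ℕ)) : Finset Box × Finset Box × (Box → ℕ) :=
  L.foldl applyMove st

def ValidSeq : List (Bool × Finset Box) → (Finset Box × Finset Box × (Box → ℕ)) → Prop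
  | [], _ => True
  | mv :: L, st => ValidMove st mv ∧ ValidSeq L (applyMove st mv)

/-- K-dual equivalence: every common sequence of (forward or reverse) slides
produces tableaux of the same shape. -/
def KDualEquiv (lam dom : Finset Box) (f g : Box → ℕ) : Prop :=
  ∀ L : List (Bool × Finset Box),
    ValidSeq L (lam, dom, f) → ValidSeq L (lam, dom, g) →
    (applySeq L (lam, dom, f)).2.1 = (applySeq L (lam, dom, g)).2.1


/-- the local growth conditions (G1) and (G2) hold on every 2×2
subsquare of a K-theory growth diagram: the top row of the square consists of
the shapes `α = λ ∪ {entries ≤ j}` and `β = λ ∪ {entries ≤ j+1}` of a tableau,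
the bottom row of the corresponding shapes `γ, δ` of its K-jdt slide; each of
`α/γ, β/α, β/δ, δ/γ` has no two boxes in a row or column, `δ` is obtained from
`γ, α, β` by a K-jdt slide of the all-ones filling of `β/α` into `α/γ`, and `α`
is uniquely determined by `γ, δ, β`. -/
-- chunk 1
lemma adjB_irrefl (a : Box) : ¬ adjB a a := by
  rintro (⟨_, h | h⟩ | ⟨_, h | h⟩) <;> omega

lemma adjB_symm {a b : Box} (h : adjB a b) : adjB b a := by
  rcases h with ⟨h1, h2⟩ | ⟨h1, h2⟩
  · exact Or.inl ⟨h1.symm, h2.symm⟩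
  · exact Or.inr ⟨h1.symm, h2.symm⟩

/-- local definition of the swap predicate -/
def swl (S : Finset Box) (b : Box) : Prop := b ∈ S ∧ ∃ n ∈ S, adjB b n

lemma swp_iff (S : Finset Box) (b : Box) :
    (∃ b' ∈ S, b' ≠ b ∧ conn S b b') ↔ swl S b := by
  constructor
  · rintro ⟨b', hb', hne, hconn⟩
    rcases (Relation.ReflTransGen.cases_head hconn) with rfl | ⟨c, ⟨hbS, hcS, hadj⟩, _⟩
    · exact absurd rfl hne
    · exact ⟨hbS, c, hcS, hadj⟩
  · rintro ⟨hb, n, hn, hadj⟩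
    have hne : n ≠ b := by rintro rfl; exact adjB_irrefl _ hadj
    exact ⟨n, hn, hne, Relation.ReflTransGen.single ⟨hb, hn, hadj⟩⟩

lemma young_row_le {μ : Finset Box} (hμ : IsYoung μ) {r c c' : ℕ}
    (h : (r, c') ∈ μ) (hle : c ≤ c') : (r, c) ∈ μ := by
  obtain ⟨k, rfl⟩ := Nat.exists_eq_add_of_le hle
  induction k with
  | zero => exact h
  | succ k ih => exact ih (hμ.2 r (c + k) h) (Nat.le_add_right _ _)

lemma young_col_le {μ : Finset Box} (hμ : IsYoung μ) {r r' c : ℕ}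
    (h : (r', c) ∈ μ) (hle : r ≤ r') : (r, c) ∈ μ := by
  obtain ⟨k, rfl⟩ := Nat.exists_eq_add_of_le hle
  induction k with
  | zero => exact h
  | succ k ih => exact ih (hμ.1 (r + k) c h) (Nat.le_add_right _ _)

lemma noTwo_empty : NoTwoSameRowCol (∅ : Finset Box) := by
  intro a ha; simp at ha
section CHUNK2
variable {delta alpha beta D V : Finset Box} {sw : Box → Prop}

lemma geom_main
    (hδ : IsYoung delta) (hα : IsYoung alpha) (hβ : IsYoung beta)
    (hδα : delta ⊆ alpha)
    (hD : ∀ b, b ∈ D ↔ b ∈ alpha ∧ b ∉ delta)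
    (hV : ∀ b, b ∈ V ↔ b ∈ beta ∧ b ∉ alpha)
    (hDa : NoTwoSameRowCol D) (hVa : NoTwoSameRowCol V)
    (hsw : ∀ b, sw b ↔ swl (D ∪ V) b) :
    IsYoung (delta ∪ V.filter (fun b => ¬ sw b) ∪ D.filter sw) ∧
    NoTwoSameRowCol (V.filter sw ∪ D.filter (fun b => ¬ sw b)) ∧
    NoTwoSameRowCol (V.filter (fun b => ¬ sw b) ∪ D.filter sw) := by
  have hpart : ∀ b ∈ beta, b ∈ delta ∨ b ∈ D ∨ b ∈ V := by
    intro b hb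
    by_cases h1 : b ∈ alpha
    · by_cases h2 : b ∈ delta
      · exact Or.inl h2
      · exact Or.inr (Or.inl ((hD b).2 ⟨h1, h2⟩))
    · exact Or.inr (Or.inr ((hV b).2 ⟨hb, h1⟩))
  have mksw : ∀ {x y : Box}, x ∈ D ∪ V → y ∈ D ∪ V → adjB x y → sw x := by
    intro x y hx hy h
    exact (hsw x).2 ⟨hx, y, hy, h⟩
  have hDV : ∀ b, b ∈ D → b ∈ V → False := by
    intro b h1 h2
    exact ((hV b).1 h2).2 ((hD b).1 h1).1
  -- the core configuration lemma, row version
  have coreR : ∀ d ∈ D, ∀ v ∈ V, d.1 = v.1 → d.2 < v.2 →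
      ∃ w ∈ D, w.1 = v.1 ∧ w.2 + 1 = v.2 := by
    rintro ⟨dr, dc⟩ hd ⟨vr, vc⟩ hv hr hc
    simp only at hr hc
    subst hr
    have hw : (dr, vc - 1) ∈ beta := by
      have : (dr, (vc - 1) + 1) ∈ beta := by
        have : vc - 1 + 1 = vc := by omega
        rw [this]
        exact ((hV _).1 hv).1
      exact hβ.2 _ _ this
    rcases hpart _ hw with h | h | h
    · exfalso
      have : (dr, dc) ∈ delta := young_row_le hδ h (by omega)
      exact ((hD _).1 hd).2 this
    · exact ⟨_, h, rfl, by omega⟩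
    · exact absurd ((hVa _ h _ hv (by simp; omega)).1) (by simp)
  -- column version
  have coreC : ∀ d ∈ D, ∀ v ∈ V, d.2 = v.2 → d.1 < v.1 →
      ∃ w ∈ D, w.2 = v.2 ∧ w.1 + 1 = v.1 := by
    rintro ⟨dr, dc⟩ hd ⟨vr, vc⟩ hv hcc hrr
    simp only at hcc hrr
    subst hcc
    have hw : (vr - 1, dc) ∈ beta := by
      have : ((vr - 1) + 1, dc) ∈ beta := by
        have : vr - 1 + 1 = vr := by omega
        rw [this]
        exact ((hV _).1 hv).1
      exact hβ.1 _ _ this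
    rcases hpart _ hw with h | h | h
    · exfalso
      have : (dr, dc) ∈ delta := young_col_le hδ h (by omega)
      exact ((hD _).1 hd).2 this
    · exact ⟨_, h, rfl, by omega⟩
    · exact absurd ((hVa _ h _ hv (by simp; omega)).2) (by simp)
  -- impossible: v ∈ V weakly northwest of d ∈ D in a row or column
  have hnw : ∀ d ∈ D, ∀ v ∈ V, (d.1 = v.1 ∧ v.2 ≤ d.2) ∨ (d.2 = v.2 ∧ v.1 ≤ d.1) → False := by
    rintro ⟨dr, dc⟩ hd ⟨vr, vc⟩ hv h
    have hdα : (dr, dc) ∈ alpha := ((hD _).1 hd).1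
    have hvα : (vr, vc) ∉ alpha := ((hV _).1 hv).2
    rcases h with ⟨h1, h2⟩ | ⟨h1, h2⟩ <;> simp only at h1 h2
    · subst h1; exact hvα (young_row_le hα hdα h2)
    · subst h1; exact hvα (young_col_le hα hdα h2)
  refine ⟨⟨?_, ?_⟩, ?_, ?_⟩
  · -- Young, vertical condition
    intro r c h
    simp only [mem_union, mem_filter] at h ⊢
    rcases h with (h | ⟨hv, hns⟩) | ⟨hd, hsd⟩
    · exact Or.inl (Or.inl (hδ.1 r c h))
    · have hb : (r, c) ∈ beta := hβ.1 r c ((hV _).1 hv).1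
      rcases hpart _ hb with h | h | h
      · exact Or.inl (Or.inl h)
      · exfalso
        exact hns (mksw (mem_union_right _ hv) (mem_union_left _ h)
          (Or.inr ⟨rfl, Or.inr rfl⟩))
      · exact absurd ((hVa _ h _ hv (by simp)).2) (by simp)
    · have ha : (r, c) ∈ alpha := hα.1 r c ((hD _).1 hd).1
      by_cases h : (r, c) ∈ delta
      · exact Or.inl (Or.inl h)
      · exfalso
        have hD2 : (r, c) ∈ D := (hD _).2 ⟨ha, h⟩
        exact absurd ((hDa _ hD2 _ hd (by simp)).2) (by simp)
  · -- Young, horizontal condition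
    intro r c h
    simp only [mem_union, mem_filter] at h ⊢
    rcases h with (h | ⟨hv, hns⟩) | ⟨hd, hsd⟩
    · exact Or.inl (Or.inl (hδ.2 r c h))
    · have hb : (r, c) ∈ beta := hβ.2 r c ((hV _).1 hv).1
      rcases hpart _ hb with h | h | h
      · exact Or.inl (Or.inl h)
      · exfalso
        exact hns (mksw (mem_union_right _ hv) (mem_union_left _ h)
          (Or.inl ⟨rfl, Or.inr rfl⟩))
      · exact absurd ((hVa _ h _ hv (by simp)).1) (by simp)
    · have ha : (r, c) ∈ alpha := hα.2 r c ((hD _).1 hd).1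
      by_cases h : (r, c) ∈ delta
      · exact Or.inl (Or.inl h)
      · exfalso
        have hD2 : (r, c) ∈ D := (hD _).2 ⟨ha, h⟩
        exact absurd ((hDa _ hD2 _ hd (by simp)).1) (by simp)
  · -- new dots antichain : V.filter sw ∪ D.filter ¬sw
    intro a ha b hb hne
    simp only [mem_union, mem_filter] at ha hb
    rcases ha with ⟨haV, hasw⟩ | ⟨haD, hans⟩ <;>
      rcases hb with ⟨hbV, hbsw⟩ | ⟨hbD, hbns⟩
    · exact hVa _ haV _ hbV hne
    · -- a = v ∈ V sw, b = d ∈ D ¬sw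
      constructor
      · intro hrow
        rcases Nat.lt_trichotomy b.2 a.2 with hlt | heq | hgt
        · obtain ⟨w, hw, hw1, hw2⟩ := coreR _ hbD _ haV (by omega) hlt
          rcases eq_or_ne w b with rfl | hne2
          · exact hbns (mksw (mem_union_left _ hbD) (mem_union_right _ haV)
              (by unfold adjB; omega))
          · exact (hDa _ hw _ hbD hne2).1 (by omega)
        · exact hne (Prod.ext (by omega) (by omega))
        · exact hnw _ hbD _ haV (by omega)
      · intro hcol
        rcases Nat.lt_trichotomy b.1 a.1 with hlt | heq | hgt
        · obtain ⟨w, hw, hw1, hw2⟩ := coreC _ hbD _ haV (by omega) hlt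
          rcases eq_or_ne w b with rfl | hne2
          · exact hbns (mksw (mem_union_left _ hbD) (mem_union_right _ haV)
              (by unfold adjB; omega))
          · exact (hDa _ hw _ hbD hne2).2 (by omega)
        · exact hne (Prod.ext (by omega) (by omega))
        · exact hnw _ hbD _ haV (by omega)
    · -- a = d ∈ D ¬sw, b = v ∈ V sw
      constructor
      · intro hrow
        rcases Nat.lt_trichotomy a.2 b.2 with hlt | heq | hgt
        · obtain ⟨w, hw, hw1, hw2⟩ := coreR _ haD _ hbV (by omega) hlt
          rcases eq_or_ne w a with rfl | hne2
          · exact hans (mksw (mem_union_left _ haD) (mem_union_right _ hbV)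
              (by unfold adjB; omega))
          · exact (hDa _ hw _ haD hne2).1 (by omega)
        · exact hne (Prod.ext (by omega) (by omega))
        · exact hnw _ haD _ hbV (by omega)
      · intro hcol
        rcases Nat.lt_trichotomy a.1 b.1 with hlt | heq | hgt
        · obtain ⟨w, hw, hw1, hw2⟩ := coreC _ haD _ hbV (by omega) hlt
          rcases eq_or_ne w a with rfl | hne2
          · exact hans (mksw (mem_union_left _ haD) (mem_union_right _ hbV)
              (by unfold adjB; omega))
          · exact (hDa _ hw _ haD hne2).2 (by omega)
        · exact hne (Prod.ext (by omega) (by omega))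
        · exact hnw _ haD _ hbV (by omega)
    · exact hDa _ haD _ hbD hne
  · -- new fillings antichain : V.filter ¬sw ∪ D.filter sw
    intro a ha b hb hne
    simp only [mem_union, mem_filter] at ha hb
    rcases ha with ⟨haV, hans⟩ | ⟨haD, hasw⟩ <;>
      rcases hb with ⟨hbV, hbns⟩ | ⟨hbD, hbsw⟩
    · exact hVa _ haV _ hbV hne
    · -- a = v ∈ V ¬sw, b = d ∈ D sw
      constructor
      · intro hrow
        rcases Nat.lt_trichotomy b.2 a.2 with hlt | heq | hgt
        · obtain ⟨w, hw, hw1, hw2⟩ := coreR _ hbD _ haV (by omega) hlt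
          exact hans (mksw (mem_union_right _ haV) (mem_union_left _ hw)
            (by unfold adjB; omega))
        · exact hne (Prod.ext (by omega) (by omega))
        · exact hnw _ hbD _ haV (by omega)
      · intro hcol
        rcases Nat.lt_trichotomy b.1 a.1 with hlt | heq | hgt
        · obtain ⟨w, hw, hw1, hw2⟩ := coreC _ hbD _ haV (by omega) hlt
          exact hans (mksw (mem_union_right _ haV) (mem_union_left _ hw)
            (by unfold adjB; omega))
        · exact hne (Prod.ext (by omega) (by omega))
        · exact hnw _ hbD _ haV (by omega)
    · -- a = d ∈ D sw, b = v ∈ V ¬sw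
      constructor
      · intro hrow
        rcases Nat.lt_trichotomy a.2 b.2 with hlt | heq | hgt
        · obtain ⟨w, hw, hw1, hw2⟩ := coreR _ haD _ hbV (by omega) hlt
          exact hbns (mksw (mem_union_right _ hbV) (mem_union_left _ hw)
            (by unfold adjB; omega))
        · exact hne (Prod.ext (by omega) (by omega))
        · exact hnw _ haD _ hbV (by omega)
      · intro hcol
        rcases Nat.lt_trichotomy a.1 b.1 with hlt | heq | hgt
        · obtain ⟨w, hw, hw1, hw2⟩ := coreC _ haD _ hbV (by omega) hlt
          exact hbns (mksw (mem_union_right _ hbV) (mem_union_left _ hw)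
            (by unfold adjB; omega))
        · exact hne (Prod.ext (by omega) (by omega))
        · exact hnw _ haD _ hbV (by omega)
    · exact hDa _ haD _ hbD hne
end CHUNK2
-- CHUNK 3 : tableau-level lemmas
def swpred (S : Finset Box) (b : Box) : Prop := ∃ b' ∈ S, b' ≠ b ∧ conn S b b'

lemma swpred_iff (S : Finset Box) (b : Box) : swpred S b ↔ swl S b := swp_iff S b

lemma noTwo_subset {A B : Finset Box} (h : A ⊆ B) (hB : NoTwoSameRowCol B) :
    NoTwoSameRowCol A := fun a ha b hb hne => hB a (h ha) b (h hb) hne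

lemma antichain_no_swl {T : Finset Box} (hT : NoTwoSameRowCol T) (b : Box) :
    ¬ swl T b := by
  rintro ⟨hb, n, hn, adj⟩
  have hne : b ≠ n := by rintro rfl; exact adjB_irrefl _ adj
  have := hT b hb n hn hne
  rcases adj with ⟨h1, _⟩ | ⟨h1, _⟩
  · exact this.1 h1
  · exact this.2 h1

section Tab
variable {lam nu : Finset Box} {f : Box → ℕ}

lemma skew_mid_row (hlam : IsYoung lam) (hnu : IsYoung nu) {r c c' c'' : ℕ}
    (h1 : (r, c) ∈ nu \ lam) (h2 : (r, c') ∈ nu \ lam) (hle1 : c ≤ c'') (hle2 : c'' ≤ c') :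
    (r, c'') ∈ nu \ lam := by
  simp only [mem_sdiff] at h1 h2 ⊢
  refine ⟨young_row_le hnu h2.1 hle2, fun hmem => h1.2 (young_row_le hlam hmem hle1)⟩

lemma skew_mid_col (hlam : IsYoung lam) (hnu : IsYoung nu) {r r' r'' c : ℕ}
    (h1 : (r, c) ∈ nu \ lam) (h2 : (r', c) ∈ nu \ lam) (hle1 : r ≤ r'') (hle2 : r'' ≤ r') :
    (r'', c) ∈ nu \ lam := by
  simp only [mem_sdiff] at h1 h2 ⊢
  refine ⟨young_col_le hnu h2.1 hle2, fun hmem => h1.2 (young_col_le hlam hmem hle1)⟩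

lemma row_strict (hlam : IsYoung lam) (hnu : IsYoung nu)
    (hI : IncreasingOn (nu \ lam) f) {r c : ℕ} :
    ∀ k, (r, c) ∈ nu \ lam → (r, c + k + 1) ∈ nu \ lam → f (r, c) < f (r, c + k + 1) := by
  intro k
  induction k with
  | zero => exact fun h1 h2 => hI.1 r c h1 h2
  | succ k ih =>
    intro h1 h2
    have hmid : (r, c + k + 1) ∈ nu \ lam :=
      skew_mid_row hlam hnu h1 h2 (by omega) (by omega)
    exact lt_trans (ih h1 hmid) (hI.1 r (c + k + 1) hmid h2)

lemma col_strict (hlam : IsYoung lam) (hnu : IsYoung nu)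
    (hI : IncreasingOn (nu \ lam) f) {r c : ℕ} :
    ∀ k, (r, c) ∈ nu \ lam → (r + k + 1, c) ∈ nu \ lam → f (r, c) < f (r + k + 1, c) := by
  intro k
  induction k with
  | zero => exact fun h1 h2 => hI.2 r c h1 h2
  | succ k ih =>
    intro h1 h2
    have hmid : (r + k + 1, c) ∈ nu \ lam :=
      skew_mid_col hlam hnu h1 h2 (by omega) (by omega)
    exact lt_trans (ih h1 hmid) (hI.2 (r + k + 1) c hmid h2)

lemma level_antichain (hlam : IsYoung lam) (hnu : IsYoung nu)
    (hI : IncreasingOn (nu \ lam) f) (v : ℕ) :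
    NoTwoSameRowCol ((nu \ lam).filter (fun b => f b = v)) := by
  rintro ⟨ar, ac⟩ ha ⟨br, bc⟩ hb hne
  simp only [mem_filter] at ha hb
  constructor
  · intro hrow
    simp only at hrow
    subst hrow
    rcases Nat.lt_trichotomy ac bc with hlt | heq | hgt
    · obtain ⟨k, rfl⟩ : ∃ k, bc = ac + k + 1 := ⟨bc - ac - 1, by omega⟩
      have := row_strict hlam hnu hI k ha.1 hb.1
      omega
    · exact hne (by simp [heq])
    · obtain ⟨k, rfl⟩ : ∃ k, ac = bc + k + 1 := ⟨ac - bc - 1, by omega⟩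
      have := row_strict hlam hnu hI k hb.1 ha.1
      omega
  · intro hcol
    simp only at hcol
    subst hcol
    rcases Nat.lt_trichotomy ar br with hlt | heq | hgt
    · obtain ⟨k, rfl⟩ : ∃ k, br = ar + k + 1 := ⟨br - ar - 1, by omega⟩
      have := col_strict hlam hnu hI k ha.1 hb.1
      omega
    · exact hne (by simp [heq])
    · obtain ⟨k, rfl⟩ : ∃ k, ar = br + k + 1 := ⟨ar - br - 1, by omega⟩
      have := col_strict hlam hnu hI k hb.1 ha.1
      omega

lemma alpha_young_aux (hlam : IsYoung lam) (hnu : IsYoung nu)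
    (hI : IncreasingOn (nu \ lam) f) (i : ℕ) :
    IsYoung (lam ∪ (nu \ lam).filter (fun b => f b ≤ i)) := by
  constructor
  · intro r c h
    simp only [mem_union, mem_filter, mem_sdiff] at h ⊢
    rcases h with h | ⟨⟨h1, h2⟩, h3⟩
    · exact Or.inl (hlam.1 r c h)
    · have hn : (r, c) ∈ nu := hnu.1 r c h1
      by_cases hl : (r, c) ∈ lam
      · exact Or.inl hl
      · refine Or.inr ⟨⟨hn, hl⟩, ?_⟩
        have := hI.2 r c (by simp [mem_sdiff, hn, hl]) (by simp [mem_sdiff, h1, h2])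
        omega
  · intro r c h
    simp only [mem_union, mem_filter, mem_sdiff] at h ⊢
    rcases h with h | ⟨⟨h1, h2⟩, h3⟩
    · exact Or.inl (hlam.2 r c h)
    · have hn : (r, c) ∈ nu := hnu.2 r c h1
      by_cases hl : (r, c) ∈ lam
      · exact Or.inl hl
      · refine Or.inr ⟨⟨hn, hl⟩, ?_⟩
        have := hI.1 r c (by simp [mem_sdiff, hn, hl]) (by simp [mem_sdiff, h1, h2])
        omega

lemma alpha_mono (i : ℕ) :
    lam ∪ (nu \ lam).filter (fun b => f b ≤ i) ⊆
      lam ∪ (nu \ lam).filter (fun b => f b ≤ i + 1) := by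
  intro b hb
  simp only [mem_union, mem_filter] at hb ⊢
  rcases hb with h | ⟨h1, h2⟩
  · exact Or.inl h
  · exact Or.inr ⟨h1, by omega⟩

lemma alpha_diff (i : ℕ) :
    ∀ b : Box, b ∈ (nu \ lam).filter (fun b => f b = i + 1) ↔
      b ∈ lam ∪ (nu \ lam).filter (fun b => f b ≤ i + 1) ∧
        b ∉ lam ∪ (nu \ lam).filter (fun b => f b ≤ i) := by
  intro b
  simp only [mem_union, mem_filter, mem_sdiff]
  constructor
  · rintro ⟨⟨h1, h2⟩, h3⟩
    refine ⟨Or.inr ⟨⟨h1, h2⟩, by omega⟩, ?_⟩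
    rintro (h | ⟨_, h4⟩)
    · exact h2 h
    · omega
  · rintro ⟨h1 | ⟨h1, h2⟩, h3⟩
    · exact absurd (Or.inl h1) h3
    · refine ⟨h1, ?_⟩
      by_contra hne
      exact h3 (Or.inr ⟨h1, by omega⟩)

end Tab

section Corners

variable {lam xs : Finset Box}

lemma xs_sub_lam (hxsc : ∀ x ∈ xs, InnerCorner lam x) : xs ⊆ lam :=
  fun x hx => (hxsc x hx).1

lemma gamma_young (hlam : IsYoung lam) (hxsc : ∀ x ∈ xs, InnerCorner lam x) :
    IsYoung (lam \ xs) := by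
  constructor
  · intro r c h
    simp only [mem_sdiff] at h ⊢
    refine ⟨hlam.1 r c h.1, fun hx => ?_⟩
    exact (hxsc _ hx).2.1 h.1
  · intro r c h
    simp only [mem_sdiff] at h ⊢
    refine ⟨hlam.2 r c h.1, fun hx => ?_⟩
    exact (hxsc _ hx).2.2 h.1

lemma xs_antichain (hlam : IsYoung lam) (hxsc : ∀ x ∈ xs, InnerCorner lam x) :
    NoTwoSameRowCol xs := by
  rintro ⟨ar, ac⟩ ha ⟨br, bc⟩ hb hne
  obtain ⟨haL, haR, haD⟩ := hxsc _ ha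
  obtain ⟨hbL, hbR, hbD⟩ := hxsc _ hb
  simp only at haR haD hbR hbD
  constructor
  · intro hrow
    simp only at hrow
    subst hrow
    rcases Nat.lt_trichotomy ac bc with hlt | heq | hgt
    · exact haD (young_row_le hlam hbL (by omega))
    · exact hne (by simp [heq])
    · exact hbD (young_row_le hlam haL (by omega))
  · intro hcol
    simp only at hcol
    subst hcol
    rcases Nat.lt_trichotomy ar br with hlt | heq | hgt
    · exact haR (young_col_le hlam hbL (by omega))
    · exact hne (by simp [heq])
    · exact hbR (young_col_le hlam haL (by omega))

end Corners

-- CHUNK 4 : computation lemmas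
def stepS (st : Finset Box × Finset Box × (Box → ℕ)) (i : ℕ) : Finset Box :=
  st.1 ∪ st.2.1.filter (fun b => st.2.2 b = i)

lemma mem_stepS {st : Finset Box × Finset Box × (Box → ℕ)} {i : ℕ} {b : Box} :
    b ∈ stepS st i ↔ (b ∈ st.1 ∨ (b ∈ st.2.1 ∧ st.2.2 b = i)) := by
  unfold stepS
  simp [mem_union, mem_filter]

lemma stepS_exists_iff (st : Finset Box × Finset Box × (Box → ℕ)) (i : ℕ) (c : Box) :
    (∃ b', (b' ∈ st.1 ∨ b' ∈ st.2.1 ∧ st.2.2 b' = i) ∧ b' ≠ c ∧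
        conn (st.1 ∪ st.2.1.filter (fun b => st.2.2 b = i)) c b') ↔
      swl (stepS st i) c := by
  rw [← swp_iff]
  constructor
  · rintro ⟨b', h1, h2⟩
    exact ⟨b', mem_stepS.2 h1, h2⟩
  · rintro ⟨b', h1, h2⟩
    exact ⟨b', mem_stepS.1 h1, h2⟩

lemma mem_switchStep_fst {st : Finset Box × Finset Box × (Box → ℕ)} {i : ℕ} {b : Box} :
    b ∈ (switchStep st i).1 ↔
      ((b ∈ st.2.1 ∧ st.2.2 b = i ∧ swl (stepS st i) b) ∨
        (b ∈ st.1 ∧ ¬ swl (stepS st i) b)) := by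
  simp only [switchStep, mem_union, mem_filter, stepS_exists_iff]

lemma mem_switchStep_dom {st : Finset Box × Finset Box × (Box → ℕ)} {i : ℕ} {b : Box} :
    b ∈ (switchStep st i).2.1 ↔
      ((b ∈ st.2.1 ∧ ¬ (st.2.2 b = i ∧ swl (stepS st i) b)) ∨
        (b ∈ st.1 ∧ swl (stepS st i) b)) := by
  simp only [switchStep, mem_union, mem_filter, stepS_exists_iff]

lemma switchStep_val_pos {st : Finset Box × Finset Box × (Box → ℕ)} {i : ℕ} {b : Box}
    (h1 : b ∈ st.1) (h2 : swl (stepS st i) b) : (switchStep st i).2.2 b = i := by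
  simp only [switchStep]
  rw [if_pos]
  refine ⟨h1, ?_⟩
  have := (swp_iff (stepS st i) b).2 h2
  obtain ⟨b', hb', h⟩ := this
  exact ⟨b', hb', h⟩

lemma switchStep_val_neg {st : Finset Box × Finset Box × (Box → ℕ)} {i : ℕ} {b : Box}
    (h : ¬ (b ∈ st.1 ∧ swl (stepS st i) b)) : (switchStep st i).2.2 b = st.2.2 b := by
  simp only [switchStep]
  rw [if_neg]
  rintro ⟨hc1, hc2⟩
  refine h ⟨hc1, (swp_iff (stepS st i) b).1 ?_⟩
  obtain ⟨b', hb', hh⟩ := hc2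
  exact ⟨b', hb', hh⟩

lemma KState_zero (xs dom : Finset Box) (f : Box → ℕ) :
    KState xs dom f 0 = (xs, dom, f) := rfl

lemma KState_succ (xs dom : Finset Box) (f : Box → ℕ) (m : ℕ) :
    KState xs dom f (m + 1) = switchStep (KState xs dom f m) (m + 1) := by
  simp [KState, List.range_succ]

lemma KJdt_empty (A : Finset Box) (g : Box → ℕ) : (KJdt A ∅ g).1 = ∅ := by
  have h : maxEntry (∅ : Finset Box) g = 0 := rfl
  simp [KJdt, h, KState_zero]

lemma filter_iff_pred {s : Finset Box} {p q : Box → Prop}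
    (h : ∀ b ∈ s, p b ↔ q b) : s.filter p = s.filter q := by
  apply Finset.filter_congr
  intro b hb
  simp [h b hb]

lemma KJdt_ones (A B : Finset Box) (hB : B.Nonempty) :
    (KJdt A B (fun _ => 1)).1 =
      B.filter (fun b => ¬ swl (A ∪ B) b) ∪ A.filter (swl (A ∪ B)) := by
  have hmax : maxEntry B (fun _ : Box => 1) = 1 := by
    simpa [maxEntry] using Finset.sup_const hB 1
  have h1 : KState A B (fun _ => 1) 1 = switchStep (A, B, fun _ => 1) (0 + 1) := by
    rw [KState_succ, KState_zero]
  have hS : stepS (A, B, fun _ => (1 : ℕ)) (0 + 1) = A ∪ B := by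
    simp [stepS]
  simp only [KJdt, hmax, h1]
  ext b
  rw [mem_switchStep_dom]
  simp only [hS, mem_union, mem_filter]
  norm_num
-- CHUNK 5 : the slide invariant
section Invariant
variable (lam nu xs : Finset Box) (f : Box → ℕ)

noncomputable def Dot (i : ℕ) : Finset Box := (KState xs (nu \ lam) f i).1
noncomputable def Dmn (i : ℕ) : Finset Box := (KState xs (nu \ lam) f i).2.1
noncomputable def Gf (i : ℕ) : Box → ℕ := (KState xs (nu \ lam) f i).2.2
noncomputable def Alph (i : ℕ) : Finset Box := lam ∪ (nu \ lam).filter (fun b => f b ≤ i)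
noncomputable def Del (i : ℕ) : Finset Box :=
  (lam \ xs) ∪ (Dmn lam nu xs f i).filter (fun b => Gf lam nu xs f i b ≤ i)
noncomputable def Vv (i : ℕ) : Finset Box := (nu \ lam).filter (fun b => f b = i)

def InvP (i : ℕ) : Prop :=
  Del lam nu xs f i ⊆ Alph lam nu f i ∧
  Dot lam nu xs f i = Alph lam nu f i \ Del lam nu xs f i ∧
  (∀ b v, i < v →
    ((b ∈ Dmn lam nu xs f i ∧ Gf lam nu xs f i b = v) ↔ (b ∈ nu \ lam ∧ f b = v))) ∧
  IsYoung (Del lam nu xs f i) ∧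
  NoTwoSameRowCol (Dot lam nu xs f i) ∧
  Disjoint (Dot lam nu xs f i) (Dmn lam nu xs f i)

end Invariant

section InvariantLemmas
variable {lam nu xs : Finset Box} {f : Box → ℕ}

lemma mem_Vv {i : ℕ} {b : Box} : b ∈ Vv lam nu f i ↔ b ∈ nu \ lam ∧ f b = i := by
  unfold Vv; exact mem_filter

lemma mem_Alph {i : ℕ} {b : Box} :
    b ∈ Alph lam nu f i ↔ b ∈ lam ∨ (b ∈ nu \ lam ∧ f b ≤ i) := by
  unfold Alph; simp [mem_union, mem_filter]

lemma mem_Del {i : ℕ} {b : Box} :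
    b ∈ Del lam nu xs f i ↔ b ∈ lam \ xs ∨
      (b ∈ Dmn lam nu xs f i ∧ Gf lam nu xs f i b ≤ i) := by
  unfold Del; simp [mem_union, mem_filter]

lemma alph_mono (i : ℕ) : Alph lam nu f i ⊆ Alph lam nu f (i + 1) := by
  intro b hb
  rw [mem_Alph] at hb ⊢
  rcases hb with h | ⟨h1, h2⟩
  · exact Or.inl h
  · exact Or.inr ⟨h1, by omega⟩

lemma mem_Vv_alph {i : ℕ} {b : Box} :
    b ∈ Vv lam nu f (i + 1) ↔ b ∈ Alph lam nu f (i + 1) ∧ b ∉ Alph lam nu f i := by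
  unfold Vv Alph
  exact alpha_diff i b

lemma alphaY (hlam : IsYoung lam) (hnu : IsYoung nu)
    (hI : IncreasingOn (nu \ lam) f) (i : ℕ) : IsYoung (Alph lam nu f i) :=
  alpha_young_aux hlam hnu hI i

lemma dot_succ (i : ℕ) : Dot lam nu xs f (i + 1) =
    (switchStep (KState xs (nu \ lam) f i) (i + 1)).1 := by
  unfold Dot; rw [KState_succ]

lemma dmn_succ (i : ℕ) : Dmn lam nu xs f (i + 1) =
    (switchStep (KState xs (nu \ lam) f i) (i + 1)).2.1 := by
  unfold Dmn; rw [KState_succ]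

lemma gf_succ (i : ℕ) : Gf lam nu xs f (i + 1) =
    (switchStep (KState xs (nu \ lam) f i) (i + 1)).2.2 := by
  unfold Gf; rw [KState_succ]

lemma gf_succ_notdot (i : ℕ) (b : Box) (hb : b ∉ Dot lam nu xs f i) :
    Gf lam nu xs f (i + 1) b = Gf lam nu xs f i b := by
  rw [gf_succ]
  exact switchStep_val_neg (fun hcon => hb hcon.1)

lemma gf_succ_dot (i : ℕ) (b : Box) (h1 : b ∈ Dot lam nu xs f i)
    (h2 : swl (stepS (KState xs (nu \ lam) f i) (i + 1)) b) :
    Gf lam nu xs f (i + 1) b = i + 1 := by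
  rw [gf_succ]
  exact switchStep_val_pos h1 h2

lemma mem_dmn_succ (i : ℕ) (b : Box) :
    b ∈ Dmn lam nu xs f (i + 1) ↔
      ((b ∈ Dmn lam nu xs f i ∧ ¬ (Gf lam nu xs f i b = i + 1 ∧
          swl (stepS (KState xs (nu \ lam) f i) (i + 1)) b)) ∨
        (b ∈ Dot lam nu xs f i ∧ swl (stepS (KState xs (nu \ lam) f i) (i + 1)) b)) := by
  rw [dmn_succ, mem_switchStep_dom]
  exact Iff.rfl

lemma mem_dot_succ (i : ℕ) (b : Box) :
    b ∈ Dot lam nu xs f (i + 1) ↔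
      ((b ∈ Dmn lam nu xs f i ∧ Gf lam nu xs f i b = i + 1 ∧
          swl (stepS (KState xs (nu \ lam) f i) (i + 1)) b) ∨
        (b ∈ Dot lam nu xs f i ∧ ¬ swl (stepS (KState xs (nu \ lam) f i) (i + 1)) b)) := by
  rw [dot_succ, mem_switchStep_fst]
  exact Iff.rfl

-- the step structure lemma
lemma step_pack (hlam : IsYoung lam) (hnu : IsYoung nu)
    (hI : IncreasingOn (nu \ lam) f) (i : ℕ) (h : InvP lam nu xs f i) :
    InvP lam nu xs f (i + 1) ∧
    Del lam nu xs f (i + 1) = Del lam nu xs f i ∪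
      ((Vv lam nu f (i + 1)).filter
          (fun b => ¬ swl (Dot lam nu xs f i ∪ Vv lam nu f (i + 1)) b) ∪
        (Dot lam nu xs f i).filter
          (swl (Dot lam nu xs f i ∪ Vv lam nu f (i + 1)))) ∧
    NoTwoSameRowCol
      ((Vv lam nu f (i + 1)).filter
          (fun b => ¬ swl (Dot lam nu xs f i ∪ Vv lam nu f (i + 1)) b) ∪
        (Dot lam nu xs f i).filter
          (swl (Dot lam nu xs f i ∪ Vv lam nu f (i + 1)))) ∧
    Dot lam nu xs f (i + 1) =
      (Vv lam nu f (i + 1)).filter (swl (Dot lam nu xs f i ∪ Vv lam nu f (i + 1))) ∪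
        (Dot lam nu xs f i).filter
          (fun b => ¬ swl (Dot lam nu xs f i ∪ Vv lam nu f (i + 1)) b) := by
  obtain ⟨ha, hb, hc, hd, he, hf⟩ := h
  have hVa : NoTwoSameRowCol (Vv lam nu f (i + 1)) := level_antichain hlam hnu hI (i + 1)
  have hstepS : stepS (KState xs (nu \ lam) f i) (i + 1) =
      Dot lam nu xs f i ∪ Vv lam nu f (i + 1) := by
    unfold stepS
    congr 1
    ext b
    rw [mem_filter, mem_Vv]
    constructor
    · exact fun hh => (hc b (i + 1) (by omega)).1 hh
    · exact fun hh => (hc b (i + 1) (by omega)).2 hh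
  have hVdm : ∀ b ∈ Vv lam nu f (i + 1),
      b ∈ Dmn lam nu xs f i ∧ Gf lam nu xs f i b = i + 1 := by
    intro b hbV; exact (hc b (i + 1) (by omega)).2 (mem_Vv.1 hbV)
  have hdisjDV : ∀ b, b ∈ Dot lam nu xs f i → b ∈ Vv lam nu f (i + 1) → False := by
    intro b h1 h2; exact (Finset.disjoint_left.1 hf) h1 (hVdm b h2).1
  have hDalph : ∀ b, b ∈ Dot lam nu xs f i ↔
      (b ∈ Alph lam nu f i ∧ b ∉ Del lam nu xs f i) := by
    intro b; rw [hb, mem_sdiff]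
  have hVnotdel : ∀ b ∈ Vv lam nu f (i + 1), b ∉ Del lam nu xs f i := by
    intro b hbV hdel
    exact (mem_Vv_alph.1 hbV).2 (ha hdel)
  have s2a : Dot lam nu xs f (i + 1) =
      (Vv lam nu f (i + 1)).filter (swl (Dot lam nu xs f i ∪ Vv lam nu f (i + 1))) ∪
        (Dot lam nu xs f i).filter
          (fun b => ¬ swl (Dot lam nu xs f i ∪ Vv lam nu f (i + 1)) b) := by
    ext b
    rw [mem_dot_succ, hstepS]
    simp only [mem_union, mem_filter]
    constructor
    · rintro (⟨h1, h2, h3⟩ | ⟨h1, h2⟩)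
      · exact Or.inl ⟨mem_Vv.2 ((hc b (i + 1) (by omega)).1 ⟨h1, h2⟩), h3⟩
      · exact Or.inr ⟨h1, h2⟩
    · rintro (⟨h1, h2⟩ | ⟨h1, h2⟩)
      · obtain ⟨h3, h4⟩ := hVdm b h1
        exact Or.inl ⟨h3, h4, h2⟩
      · exact Or.inr ⟨h1, h2⟩
  have s3 : Del lam nu xs f (i + 1) = Del lam nu xs f i ∪
      ((Vv lam nu f (i + 1)).filter
          (fun b => ¬ swl (Dot lam nu xs f i ∪ Vv lam nu f (i + 1)) b) ∪
        (Dot lam nu xs f i).filter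
          (swl (Dot lam nu xs f i ∪ Vv lam nu f (i + 1)))) := by
    ext b
    rw [mem_Del]
    simp only [mem_union, mem_filter, mem_Del]
    constructor
    · rintro (hγ | ⟨h1, h2⟩)
      · exact Or.inl (Or.inl hγ)
      · rcases (mem_dmn_succ i b).1 h1 with ⟨h3, h4⟩ | ⟨h3, h4⟩
        · have hbD : b ∉ Dot lam nu xs f i := (Finset.disjoint_right.1 hf) h3
          rw [gf_succ_notdot i b hbD] at h2
          by_cases h5 : Gf lam nu xs f i b ≤ i
          · exact Or.inl (Or.inr ⟨h3, h5⟩)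
          · have h6 : Gf lam nu xs f i b = i + 1 := by omega
            rw [hstepS] at h4
            exact Or.inr (Or.inl ⟨mem_Vv.2 ((hc b (i + 1) (by omega)).1 ⟨h3, h6⟩),
              fun hs => h4 ⟨h6, hs⟩⟩)
        · rw [hstepS] at h4
          exact Or.inr (Or.inr ⟨h3, h4⟩)
    · rintro ((hγ | ⟨h1, h2⟩) | (⟨h1, h2⟩ | ⟨h1, h2⟩))
      · exact Or.inl hγ
      · have hbD : b ∉ Dot lam nu xs f i := (Finset.disjoint_right.1 hf) h1
        refine Or.inr ⟨(mem_dmn_succ i b).2 (Or.inl ⟨h1, fun hcon => by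
          have := hcon.1; omega⟩), ?_⟩
        rw [gf_succ_notdot i b hbD]; omega
      · obtain ⟨h3, h4⟩ := hVdm b h1
        have hbD : b ∉ Dot lam nu xs f i := fun hdd => hdisjDV b hdd h1
        refine Or.inr ⟨(mem_dmn_succ i b).2 (Or.inl ⟨h3, fun hcon => by
          rw [hstepS] at hcon; exact h2 hcon.2⟩), ?_⟩
        rw [gf_succ_notdot i b hbD]; omega
      · refine Or.inr ⟨(mem_dmn_succ i b).2 (Or.inr ⟨h1, by rw [hstepS]; exact h2⟩), ?_⟩
        rw [gf_succ_dot i b h1 (by rw [hstepS]; exact h2)]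
  obtain ⟨gy, gs1, gs2⟩ := geom_main hd (alphaY hlam hnu hI i) (alphaY hlam hnu hI (i + 1))
    ha hDalph (fun b => mem_Vv_alph) he hVa
    (fun b => Iff.rfl : ∀ b, swl (Dot lam nu xs f i ∪ Vv lam nu f (i + 1)) b ↔
      swl (Dot lam nu xs f i ∪ Vv lam nu f (i + 1)) b)
  have hd' : IsYoung (Del lam nu xs f (i + 1)) := by
    rw [s3, ← union_assoc]; exact gy
  have he' : NoTwoSameRowCol (Dot lam nu xs f (i + 1)) := by
    rw [s2a]; exact gs1
  have ha' : Del lam nu xs f (i + 1) ⊆ Alph lam nu f (i + 1) := by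
    rw [s3]
    refine union_subset (ha.trans (alph_mono i)) (union_subset ?_ ?_)
    · exact (filter_subset _ _).trans (fun b hb2 => (mem_Vv_alph.1 hb2).1)
    · refine (filter_subset _ _).trans ?_
      intro b hb2
      exact alph_mono i (((hDalph b).1 hb2).1)
  have hb' : Dot lam nu xs f (i + 1) =
      Alph lam nu f (i + 1) \ Del lam nu xs f (i + 1) := by
    ext b
    rw [s2a, s3, mem_sdiff]
    simp only [mem_union, mem_filter]
    constructor
    · rintro (⟨h1, h2⟩ | ⟨h1, h2⟩)
      · refine ⟨(mem_Vv_alph.1 h1).1, ?_⟩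
        rintro (hdel | ⟨h3, h4⟩ | ⟨h3, h4⟩)
        · exact hVnotdel b h1 hdel
        · exact h4 h2
        · exact hdisjDV b h3 h1
      · refine ⟨alph_mono i ((hDalph b).1 h1).1, ?_⟩
        rintro (hdel | ⟨h3, h4⟩ | ⟨h3, h4⟩)
        · exact ((hDalph b).1 h1).2 hdel
        · exact hdisjDV b h1 h3
        · exact h2 h4
    · rintro ⟨hβ, hnd⟩
      by_cases hα : b ∈ Alph lam nu f i
      · have hdel : b ∉ Del lam nu xs f i := fun hdd => hnd (Or.inl hdd)
        have hdot : b ∈ Dot lam nu xs f i := (hDalph b).2 ⟨hα, hdel⟩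
        by_cases hsw : swl (Dot lam nu xs f i ∪ Vv lam nu f (i + 1)) b
        · exact absurd (Or.inr (Or.inr ⟨hdot, hsw⟩)) hnd
        · exact Or.inr ⟨hdot, hsw⟩
      · have hV1 : b ∈ Vv lam nu f (i + 1) := mem_Vv_alph.2 ⟨hβ, hα⟩
        by_cases hsw : swl (Dot lam nu xs f i ∪ Vv lam nu f (i + 1)) b
        · exact Or.inl ⟨hV1, hsw⟩
        · exact absurd (Or.inr (Or.inl ⟨hV1, hsw⟩)) hnd
  have hc' : ∀ b v, i + 1 < v →
      ((b ∈ Dmn lam nu xs f (i + 1) ∧ Gf lam nu xs f (i + 1) b = v) ↔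
        (b ∈ nu \ lam ∧ f b = v)) := by
    intro b v hv
    constructor
    · rintro ⟨h1, h2⟩
      rcases (mem_dmn_succ i b).1 h1 with ⟨h3, h4⟩ | ⟨h3, h4⟩
      · have hbD : b ∉ Dot lam nu xs f i := (Finset.disjoint_right.1 hf) h3
        rw [gf_succ_notdot i b hbD] at h2
        exact (hc b v (by omega)).1 ⟨h3, h2⟩
      · rw [gf_succ_dot i b h3 h4] at h2
        omega
    · rintro ⟨h1, h2⟩
      obtain ⟨h3, h4⟩ := (hc b v (by omega)).2 ⟨h1, h2⟩
      have hbD : b ∉ Dot lam nu xs f i := (Finset.disjoint_right.1 hf) h3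
      refine ⟨(mem_dmn_succ i b).2 (Or.inl ⟨h3, fun hcon => by
        have := hcon.1; omega⟩), ?_⟩
      rw [gf_succ_notdot i b hbD]; exact h4
  have hf' : Disjoint (Dot lam nu xs f (i + 1)) (Dmn lam nu xs f (i + 1)) := by
    rw [Finset.disjoint_left]
    intro b h1 h2
    rw [s2a] at h1
    simp only [mem_union, mem_filter] at h1
    rcases (mem_dmn_succ i b).1 h2 with ⟨h3, h4⟩ | ⟨h3, h4⟩
    · rcases h1 with ⟨h5, h6⟩ | ⟨h5, h6⟩
      · obtain ⟨h7, h8⟩ := hVdm b h5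
        rw [hstepS] at h4
        exact h4 ⟨h8, h6⟩
      · exact (Finset.disjoint_left.1 hf) h5 h3
    · rcases h1 with ⟨h5, h6⟩ | ⟨h5, h6⟩
      · exact hdisjDV b h3 h5
      · rw [hstepS] at h4
        exact h6 h4
  exact ⟨⟨ha', hb', hc', hd', he', hf'⟩, s3, gs2, s2a⟩

lemma invP_zero (hlam : IsYoung lam) (hpos : ∀ b ∈ nu \ lam, 1 ≤ f b)
    (hxsc : ∀ x ∈ xs, InnerCorner lam x) : InvP lam nu xs f 0 := by
  have hfe : (nu \ lam).filter (fun b => f b ≤ 0) = ∅ := by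
    rw [Finset.filter_eq_empty_iff]
    intro b hb
    have := hpos b hb
    omega
  have hA0 : Alph lam nu f 0 = lam := by
    unfold Alph; rw [hfe, union_empty]
  have hD0 : Del lam nu xs f 0 = lam \ xs := by
    have h1 : (Dmn lam nu xs f 0).filter (fun b => Gf lam nu xs f 0 b ≤ 0) =
        (nu \ lam).filter (fun b => f b ≤ 0) := rfl
    unfold Del
    rw [h1, hfe, union_empty]
  have hDot0 : Dot lam nu xs f 0 = xs := rfl
  refine ⟨?_, ?_, ?_, ?_, ?_, ?_⟩
  · rw [hA0, hD0]; exact sdiff_subset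
  · rw [hDot0, hA0, hD0]
    ext b
    simp only [mem_sdiff]
    constructor
    · intro hbx
      exact ⟨xs_sub_lam hxsc hbx, fun hcon => hcon.2 hbx⟩
    · rintro ⟨h1, h2⟩
      by_contra hx
      exact h2 ⟨h1, hx⟩
  · intro b v hv
    exact Iff.rfl
  · rw [hD0]; exact gamma_young hlam hxsc
  · rw [hDot0]; exact xs_antichain hlam hxsc
  · rw [hDot0]
    rw [Finset.disjoint_left]
    intro b h1 h2
    have h3 : b ∈ lam := xs_sub_lam hxsc h1
    have h4 : b ∈ Dmn lam nu xs f 0 := h2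
    have h5 : b ∈ nu \ lam := h4
    exact (mem_sdiff.1 h5).2 h3

lemma invP_all (hlam : IsYoung lam) (hnu : IsYoung nu)
    (hI : IncreasingOn (nu \ lam) f) (hpos : ∀ b ∈ nu \ lam, 1 ≤ f b)
    (hxsc : ∀ x ∈ xs, InnerCorner lam x) (i : ℕ) : InvP lam nu xs f i := by
  induction i with
  | zero => exact invP_zero hlam hpos hxsc
  | succ i ih => exact (step_pack hlam hnu hI i ih).1

lemma low_step (i j : ℕ) (hji : j ≤ i) (h : InvP lam nu xs f i) :
    (Dmn lam nu xs f (i + 1)).filter (fun b => Gf lam nu xs f (i + 1) b ≤ j) =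
      (Dmn lam nu xs f i).filter (fun b => Gf lam nu xs f i b ≤ j) := by
  obtain ⟨-, -, -, -, -, hf⟩ := h
  ext b
  simp only [mem_filter]
  constructor
  · rintro ⟨h1, h2⟩
    rcases (mem_dmn_succ i b).1 h1 with ⟨h3, h4⟩ | ⟨h3, h4⟩
    · rw [gf_succ_notdot i b ((Finset.disjoint_right.1 hf) h3)] at h2
      exact ⟨h3, h2⟩
    · rw [gf_succ_dot i b h3 h4] at h2
      omega
  · rintro ⟨h1, h2⟩
    have hnd : b ∉ Dot lam nu xs f i := (Finset.disjoint_right.1 hf) h1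
    refine ⟨(mem_dmn_succ i b).2 (Or.inl ⟨h1, fun hcon => by
      have := hcon.1; omega⟩), ?_⟩
    rw [gf_succ_notdot i b hnd]; exact h2

lemma low_stable (hlam : IsYoung lam) (hnu : IsYoung nu)
    (hI : IncreasingOn (nu \ lam) f) (hpos : ∀ b ∈ nu \ lam, 1 ≤ f b)
    (hxsc : ∀ x ∈ xs, InnerCorner lam x) (j : ℕ) :
    ∀ k, j ≤ k →
      (Dmn lam nu xs f k).filter (fun b => Gf lam nu xs f k b ≤ j) =
        (Dmn lam nu xs f j).filter (fun b => Gf lam nu xs f j b ≤ j) := by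
  intro k hk
  induction k, hk using Nat.le_induction with
  | base => rfl
  | succ k hk ih =>
    rw [low_step k j hk (invP_all hlam hnu hI hpos hxsc k)]
    exact ih

lemma gf_le_sup (i : ℕ) (h : InvP lam nu xs f i) :
    ∀ b ∈ Dmn lam nu xs f i, Gf lam nu xs f i b ≤ max i (maxEntry (nu \ lam) f) := by
  intro b hb
  by_cases hgi : Gf lam nu xs f i b ≤ i
  · omega
  · obtain ⟨h1, h2⟩ := (h.2.2.1 b (Gf lam nu xs f i b) (by omega)).1 ⟨hb, rfl⟩
    have h3 : f b ≤ (nu \ lam).sup f := Finset.le_sup h1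
    have h4 : maxEntry (nu \ lam) f = (nu \ lam).sup f := rfl
    omega

end InvariantLemmas
-- CHUNK 6 : uniqueness of the local rule
lemma sdiff_union_sdiff {γ α β : Finset Box} (hl : γ ⊆ α) (hr : α ⊆ β) :
    (α \ γ) ∪ (β \ α) = β \ γ := by
  ext x
  simp only [mem_union, mem_sdiff]
  constructor
  · rintro (⟨h1, h2⟩ | ⟨h1, h2⟩)
    · exact ⟨hr h1, h2⟩
    · exact ⟨h1, fun hg => h2 (hl hg)⟩
  · rintro ⟨h1, h2⟩
    by_cases hx : x ∈ α
    · exact Or.inl ⟨hx, h2⟩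
    · exact Or.inr ⟨h1, hx⟩

lemma uniq_abs (γ β δ α₀ α' : Finset Box)
    (h0l : γ ⊆ α₀) (h0r : α₀ ⊆ β) (h1l : γ ⊆ α') (h1r : α' ⊆ β)
    (hB0 : NoTwoSameRowCol (β \ α₀)) (hB' : NoTwoSameRowCol (β \ α'))
    (e0 : δ = γ ∪ (KJdt (α₀ \ γ) (β \ α₀) (fun _ => 1)).1)
    (e1 : δ = γ ∪ (KJdt (α' \ γ) (β \ α') (fun _ => 1)).1) : α' = α₀ := by
  have key : ∀ α : Finset Box, γ ⊆ α → α ⊆ β → (β \ α).Nonempty →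
      δ = γ ∪ (KJdt (α \ γ) (β \ α) (fun _ => 1)).1 →
      ∀ x, x ∈ β → x ∉ γ →
        (x ∈ α ↔ ((swl (β \ γ) x ∧ x ∈ δ) ∨ (¬ swl (β \ γ) x ∧ x ∉ δ))) := by
    intro α hl hr hne he x hxβ hxγ
    rw [KJdt_ones _ _ hne, sdiff_union_sdiff hl hr] at he
    have hδx : x ∈ δ ↔
        ((x ∈ β \ α ∧ ¬ swl (β \ γ) x) ∨ (x ∈ α \ γ ∧ swl (β \ γ) x)) := by
      rw [he]
      simp only [mem_union, mem_filter]
      constructor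
      · rintro (hg | ⟨h1, h2⟩ | ⟨h1, h2⟩)
        · exact absurd hg hxγ
        · exact Or.inl ⟨h1, h2⟩
        · exact Or.inr ⟨h1, h2⟩
      · rintro (⟨h1, h2⟩ | ⟨h1, h2⟩)
        · exact Or.inr (Or.inl ⟨h1, h2⟩)
        · exact Or.inr (Or.inr ⟨h1, h2⟩)
    by_cases hsw : swl (β \ γ) x
    · constructor
      · intro hxα
        exact Or.inl ⟨hsw, hδx.2 (Or.inr ⟨mem_sdiff.2 ⟨hxα, hxγ⟩, hsw⟩)⟩
      · rintro (⟨-, hδ2⟩ | ⟨hns, -⟩)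
        · rcases hδx.1 hδ2 with ⟨h1, h2⟩ | ⟨h1, h2⟩
          · exact absurd hsw h2
          · exact (mem_sdiff.1 h1).1
        · exact absurd hsw hns
    · constructor
      · intro hxα
        refine Or.inr ⟨hsw, fun hδ2 => ?_⟩
        rcases hδx.1 hδ2 with ⟨h1, h2⟩ | ⟨h1, h2⟩
        · exact (mem_sdiff.1 h1).2 hxα
        · exact hsw h2
      · rintro (⟨hsw2, -⟩ | ⟨-, hnδ⟩)
        · exact absurd hsw2 hsw
        · by_contra hxα
          exact hnδ (hδx.2 (Or.inl ⟨mem_sdiff.2 ⟨hxβ, hxα⟩, hsw⟩))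
  have keyE : ∀ α : Finset Box, γ ⊆ α → α ⊆ β → NoTwoSameRowCol (β \ α) → δ = γ →
      δ = γ ∪ (KJdt (α \ γ) (β \ α) (fun _ => 1)).1 → β \ α = ∅ := by
    intro α hl hr hBa hδγ he
    by_contra hne0
    have hne : (β \ α).Nonempty := Finset.nonempty_iff_ne_empty.2 hne0
    rw [KJdt_ones _ _ hne, sdiff_union_sdiff hl hr, hδγ] at he
    have hX : ∀ x, x ∈ (β \ α).filter (fun b => ¬ swl (β \ γ) b) ∪
        (α \ γ).filter (swl (β \ γ)) → False := by
      intro x hx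
      have hxγ : x ∈ γ := by
        have h2 : x ∈ γ ∪ ((β \ α).filter (fun b => ¬ swl (β \ γ) b) ∪
            (α \ γ).filter (swl (β \ γ))) := mem_union_right _ hx
        rw [← he] at h2
        exact h2
      rcases mem_union.1 hx with h | h
      · exact (mem_sdiff.1 (mem_filter.1 h).1).2 (hl hxγ)
      · exact (mem_sdiff.1 (mem_filter.1 h).1).2 hxγ
    obtain ⟨b, hbB⟩ := hne
    have hsw : swl (β \ γ) b := by
      by_contra hns
      exact hX b (mem_union_left _ (mem_filter.2 ⟨hbB, hns⟩))
    obtain ⟨hbS, n, hn, hadj⟩ := hsw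
    by_cases hnA : n ∈ α
    · have hswn : swl (β \ γ) n := ⟨hn, b, hbS, adjB_symm hadj⟩
      exact hX n (mem_union_right _ (mem_filter.2
        ⟨mem_sdiff.2 ⟨hnA, (mem_sdiff.1 hn).2⟩, hswn⟩))
    · have hnB : n ∈ β \ α := mem_sdiff.2 ⟨(mem_sdiff.1 hn).1, hnA⟩
      have hneq : b ≠ n := fun h => adjB_irrefl b (h ▸ hadj)
      have := hBa b hbB n hnB hneq
      rcases hadj with ⟨h1, -⟩ | ⟨h1, -⟩
      · exact this.1 h1
      · exact this.2 h1
  by_cases h0e : β \ α₀ = ∅ <;> by_cases h1e : β \ α' = ∅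
  · have ha0 : α₀ = β := subset_antisymm h0r (Finset.sdiff_eq_empty_iff_subset.1 h0e)
    have ha1 : α' = β := subset_antisymm h1r (Finset.sdiff_eq_empty_iff_subset.1 h1e)
    rw [ha0, ha1]
  · rw [h0e, KJdt_empty, union_empty] at e0
    exact absurd (keyE α' h1l h1r hB' e0 e1) h1e
  · rw [h1e, KJdt_empty, union_empty] at e1
    exact absurd (keyE α₀ h0l h0r hB0 e1 e0) h0e
  · have k0 := key α₀ h0l h0r (Finset.nonempty_iff_ne_empty.2 h0e) e0
    have k1 := key α' h1l h1r (Finset.nonempty_iff_ne_empty.2 h1e) e1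
    ext x
    constructor
    · intro hx
      by_cases hxγ : x ∈ γ
      · exact h0l hxγ
      · exact (k0 x (h1r hx) hxγ).2 ((k1 x (h1r hx) hxγ).1 hx)
    · intro hx
      by_cases hxγ : x ∈ γ
      · exact h1l hxγ
      · exact (k1 x (h0r hx) hxγ).2 ((k0 x (h0r hx) hxγ).1 hx)

theorem stmt12 (lam nu : Finset Box) (f : Box → ℕ) (xs : Finset Box) (j : ℕ)
    (hlam : IsYoung lam) (hnu : IsYoung nu) (hsub : lam ⊆ nu)
    (hT : IsIncTab (nu \ lam) f) (hxs : xs.Nonempty)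
    (hxsc : ∀ x ∈ xs, InnerCorner lam x) :
    (NoTwoSameRowCol ((lam ∪ (nu \ lam).filter (fun b => f b ≤ j)) \
        ((doSlide (lam, nu \ lam, f) xs).1 ∪
          (doSlide (lam, nu \ lam, f) xs).2.1.filter
            (fun b => (doSlide (lam, nu \ lam, f) xs).2.2 b ≤ j))) ∧
      NoTwoSameRowCol ((lam ∪ (nu \ lam).filter (fun b => f b ≤ j + 1)) \
        (lam ∪ (nu \ lam).filter (fun b => f b ≤ j))) ∧
      NoTwoSameRowCol ((lam ∪ (nu \ lam).filter (fun b => f b ≤ j + 1)) \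
        ((doSlide (lam, nu \ lam, f) xs).1 ∪
          (doSlide (lam, nu \ lam, f) xs).2.1.filter
            (fun b => (doSlide (lam, nu \ lam, f) xs).2.2 b ≤ j + 1))) ∧
      NoTwoSameRowCol (((doSlide (lam, nu \ lam, f) xs).1 ∪
          (doSlide (lam, nu \ lam, f) xs).2.1.filter
            (fun b => (doSlide (lam, nu \ lam, f) xs).2.2 b ≤ j + 1)) \
        ((doSlide (lam, nu \ lam, f) xs).1 ∪
          (doSlide (lam, nu \ lam, f) xs).2.1.filter
            (fun b => (doSlide (lam, nu \ lam, f) xs).2.2 b ≤ j)))) ∧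
    ((doSlide (lam, nu \ lam, f) xs).1 ∪
        (doSlide (lam, nu \ lam, f) xs).2.1.filter
          (fun b => (doSlide (lam, nu \ lam, f) xs).2.2 b ≤ j + 1))
      = ((doSlide (lam, nu \ lam, f) xs).1 ∪
          (doSlide (lam, nu \ lam, f) xs).2.1.filter
            (fun b => (doSlide (lam, nu \ lam, f) xs).2.2 b ≤ j)) ∪
        (KJdt ((lam ∪ (nu \ lam).filter (fun b => f b ≤ j)) \
            ((doSlide (lam, nu \ lam, f) xs).1 ∪
              (doSlide (lam, nu \ lam, f) xs).2.1.filter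
                (fun b => (doSlide (lam, nu \ lam, f) xs).2.2 b ≤ j)))
          ((lam ∪ (nu \ lam).filter (fun b => f b ≤ j + 1)) \
            (lam ∪ (nu \ lam).filter (fun b => f b ≤ j)))
          (fun _ => 1)).1 ∧
    (∀ α' : Finset Box,
      ((doSlide (lam, nu \ lam, f) xs).1 ∪
        (doSlide (lam, nu \ lam, f) xs).2.1.filter
          (fun b => (doSlide (lam, nu \ lam, f) xs).2.2 b ≤ j)) ⊆ α' →
      α' ⊆ (lam ∪ (nu \ lam).filter (fun b => f b ≤ j + 1)) →
      NoTwoSameRowCol (α' \ ((doSlide (lam, nu \ lam, f) xs).1 ∪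
        (doSlide (lam, nu \ lam, f) xs).2.1.filter
          (fun b => (doSlide (lam, nu \ lam, f) xs).2.2 b ≤ j))) →
      NoTwoSameRowCol ((lam ∪ (nu \ lam).filter (fun b => f b ≤ j + 1)) \ α') →
      ((doSlide (lam, nu \ lam, f) xs).1 ∪
          (doSlide (lam, nu \ lam, f) xs).2.1.filter
            (fun b => (doSlide (lam, nu \ lam, f) xs).2.2 b ≤ j + 1))
        = ((doSlide (lam, nu \ lam, f) xs).1 ∪
            (doSlide (lam, nu \ lam, f) xs).2.1.filter
              (fun b => (doSlide (lam, nu \ lam, f) xs).2.2 b ≤ j)) ∪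
          (KJdt (α' \ ((doSlide (lam, nu \ lam, f) xs).1 ∪
              (doSlide (lam, nu \ lam, f) xs).2.1.filter
                (fun b => (doSlide (lam, nu \ lam, f) xs).2.2 b ≤ j)))
            ((lam ∪ (nu \ lam).filter (fun b => f b ≤ j + 1)) \ α')
            (fun _ => 1)).1 →
      α' = lam ∪ (nu \ lam).filter (fun b => f b ≤ j)) := by
  have hI : IncreasingOn (nu \ lam) f := hT.1
  have hpos : ∀ b ∈ nu \ lam, 1 ≤ f b := hT.2.1
  have E1 : (doSlide (lam, nu \ lam, f) xs).1 = lam \ xs := rfl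
  have E2 : (doSlide (lam, nu \ lam, f) xs).2.1 =
      Dmn lam nu xs f (maxEntry (nu \ lam) f) := rfl
  have E3 : (doSlide (lam, nu \ lam, f) xs).2.2 =
      Gf lam nu xs f (maxEntry (nu \ lam) f) := rfl
  have EA : ∀ i : ℕ, lam ∪ (nu \ lam).filter (fun b => f b ≤ i) = Alph lam nu f i :=
    fun _ => rfl
  rw [E1, E2, E3, EA j, EA (j + 1)]
  by_cases hcase : j + 1 ≤ maxEntry (nu \ lam) f
  · -- the generic case : both stages within the slide
    have Rj : lam \ xs ∪ (Dmn lam nu xs f (maxEntry (nu \ lam) f)).filter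
        (fun b => Gf lam nu xs f (maxEntry (nu \ lam) f) b ≤ j) = Del lam nu xs f j := by
      rw [low_stable hlam hnu hI hpos hxsc j (maxEntry (nu \ lam) f) (by omega)]
      rfl
    have Rj1 : lam \ xs ∪ (Dmn lam nu xs f (maxEntry (nu \ lam) f)).filter
        (fun b => Gf lam nu xs f (maxEntry (nu \ lam) f) b ≤ j + 1) =
          Del lam nu xs f (j + 1) := by
      rw [low_stable hlam hnu hI hpos hxsc (j + 1) (maxEntry (nu \ lam) f) hcase]
      rfl
    rw [Rj, Rj1]
    have Inv := invP_all hlam hnu hI hpos hxsc j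
    obtain ⟨Inv', s3, gs2, s2a⟩ := step_pack hlam hnu hI j Inv
    obtain ⟨ha, hbb, hcc, hdd, hee, hff⟩ := Inv
    have hVd : Alph lam nu f (j + 1) \ Alph lam nu f j = Vv lam nu f (j + 1) := by
      ext b
      rw [mem_sdiff]
      exact mem_Vv_alph.symm
    have hDd : Alph lam nu f j \ Del lam nu xs f j = Dot lam nu xs f j := hbb.symm
    have EQ : Del lam nu xs f (j + 1) = Del lam nu xs f j ∪
        (KJdt (Alph lam nu f j \ Del lam nu xs f j)
          (Alph lam nu f (j + 1) \ Alph lam nu f j) (fun _ => 1)).1 := by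
      rw [hDd, hVd]
      by_cases hV : (Vv lam nu f (j + 1)).Nonempty
      · rw [KJdt_ones _ _ hV]
        exact s3
      · have hVe : Vv lam nu f (j + 1) = ∅ := not_nonempty_iff_eq_empty.1 hV
        rw [hVe, KJdt_empty, union_empty, s3, hVe, filter_empty, empty_union,
          union_empty]
        have hsw0 : (Dot lam nu xs f j).filter (swl (Dot lam nu xs f j)) = ∅ := by
          rw [Finset.filter_eq_empty_iff]
          intro b _
          exact antichain_no_swl hee b
        rw [hsw0, union_empty]
    refine ⟨⟨?_, ?_, ?_, ?_⟩, EQ, ?_⟩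
    · rw [hDd]; exact hee
    · rw [hVd]; exact level_antichain hlam hnu hI (j + 1)
    · rw [← Inv'.2.1]; exact Inv'.2.2.2.2.1
    · refine noTwo_subset ?_ gs2
      intro b hb2
      rw [mem_sdiff, s3, mem_union] at hb2
      rcases hb2 with ⟨h1 | h1, h2⟩
      · exact absurd h1 h2
      · exact h1
    · intro α' h1 h2 h3 h4 h5
      exact uniq_abs (Del lam nu xs f j) (Alph lam nu f (j + 1)) (Del lam nu xs f (j + 1))
        (Alph lam nu f j) α' ha (alph_mono j) h1 h2
        (by rw [hVd]; exact level_antichain hlam hnu hI (j + 1)) h4 EQ h5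
  · -- the stabilised case : j ≥ maxEntry
    have InvM := invP_all hlam hnu hI hpos hxsc (maxEntry (nu \ lam) f)
    have hfb : ∀ b ∈ nu \ lam, f b ≤ maxEntry (nu \ lam) f := fun b hb => Finset.le_sup hb
    have As : ∀ j' : ℕ, maxEntry (nu \ lam) f ≤ j' →
        Alph lam nu f j' = Alph lam nu f (maxEntry (nu \ lam) f) := by
      intro j' hj'
      ext b
      rw [mem_Alph, mem_Alph]
      constructor
      · rintro (h | ⟨h1, h2⟩)
        · exact Or.inl h
        · exact Or.inr ⟨h1, hfb b h1⟩
      · rintro (h | ⟨h1, h2⟩)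
        · exact Or.inl h
        · exact Or.inr ⟨h1, by omega⟩
    have Rs : ∀ j' : ℕ, maxEntry (nu \ lam) f ≤ j' →
        lam \ xs ∪ (Dmn lam nu xs f (maxEntry (nu \ lam) f)).filter
          (fun b => Gf lam nu xs f (maxEntry (nu \ lam) f) b ≤ j') =
            Del lam nu xs f (maxEntry (nu \ lam) f) := by
      intro j' hj'
      have hfe : (Dmn lam nu xs f (maxEntry (nu \ lam) f)).filter
          (fun b => Gf lam nu xs f (maxEntry (nu \ lam) f) b ≤ j') =
            (Dmn lam nu xs f (maxEntry (nu \ lam) f)).filter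
              (fun b => Gf lam nu xs f (maxEntry (nu \ lam) f) b ≤
                maxEntry (nu \ lam) f) := by
        refine Finset.filter_congr fun b hb => ?_
        have := gf_le_sup (maxEntry (nu \ lam) f) InvM b hb
        rw [max_self] at this
        constructor
        · intro _; omega
        · intro _; omega
      rw [hfe]
      rfl
    rw [As j (by omega), As (j + 1) (by omega), Rs j (by omega), Rs (j + 1) (by omega)]
    refine ⟨⟨?_, ?_, ?_, ?_⟩, ?_, ?_⟩
    · rw [← InvM.2.1]; exact InvM.2.2.2.2.1
    · rw [Finset.sdiff_self]; exact noTwo_empty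
    · rw [← InvM.2.1]; exact InvM.2.2.2.2.1
    · rw [Finset.sdiff_self]; exact noTwo_empty
    · rw [Finset.sdiff_self, KJdt_empty, union_empty]
    · intro α' h1 h2 h3 h4 h5
      exact uniq_abs (Del lam nu xs f (maxEntry (nu \ lam) f))
        (Alph lam nu f (maxEntry (nu \ lam) f))
        (Del lam nu xs f (maxEntry (nu \ lam) f))
        (Alph lam nu f (maxEntry (nu \ lam) f)) α' InvM.1 (subset_refl _) h1 h2
        (by rw [Finset.sdiff_self]; exact noTwo_empty) h4
        (by rw [Finset.sdiff_self, KJdt_empty, union_empty]) h5
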